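/- Consider the lazy cycle walk on ZMod n with stay probability p, and suppose n > k and p ≥ k/(k+1). Then for every state i ∈ ZMod n, max_{j ∈ ZMod n} μ_k(i)(j) = p^k, and consequently for every probability mass function g on ZMod n (a randomized k-step-delayed action choice), ∑_{j ∈ ZMod n} g(j)·μ_k(i)(j) ≤ p^k. Hence in the environment where the agent receives reward 1 if its chosen action index equals the current state and 0 otherwise (optimal per-step reward 1), every policy whose actions are based on the state from k steps earlier suffers expected per-step regret at least 1 − p^k. -/

import Mathlib

open scoped ENNReal

/-- One step of the lazy cycle walk on `ZMod n` with stay probability `p`: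
stay at `i` with probability `p`, move to `i + 1` with probability `1 − p`. -/
noncomputable def lazyStep (n : ℕ) (p : ℝ) (hp : 0 ≤ p) (hp1 : p ≤ 1) (i : ZMod n) :
    PMF (ZMod n) :=
  (PMF.bernoulli (Real.toNNReal (1 - p)) (Real.toNNReal_le_one.mpr (by linarith))).map
    (fun b => if b then i + 1 else i)

/-- The distribution of the lazy cycle walk after `k` steps started at `i`
(the `k`-fold monadic iterate of the one-step PMF). -/
noncomputable def lazyIter (n : ℕ) (p : ℝ) (hp : 0 ≤ p) (hp1 : p ≤ 1) :
    ℕ → ZMod n → PMF (ZMod n)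
  | 0, i => PMF.pure i
  | k + 1, i => (lazyIter n p hp hp1 k i).bind (lazyStep n p hp hp1)

lemma step_apply {n : ℕ} [NeZero n] {p : ℝ} (hp : 0 ≤ p) (hp1 : p ≤ 1) (a j : ZMod n) :
    lazyStep n p hp hp1 a j
      = (if j = a then ENNReal.ofReal p else 0)
        + (if j = a + 1 then ENNReal.ofReal (1 - p) else 0) := by
  rw [lazyStep, PMF.map_apply, tsum_bool]
  simp only [if_true, if_false, PMF.bernoulli_apply, Bool.cond_false, Bool.cond_true]
  simp only [ENNReal.coe_sub, ENNReal.coe_one, ← ENNReal.ofReal.eq_1]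
  have h1 : (1 : ℝ≥0∞) - ENNReal.ofReal (1 - p) = ENNReal.ofReal p := by
    rw [← ENNReal.ofReal_one, ← ENNReal.ofReal_sub _ (by linarith)]
    norm_num
  rw [h1]
  norm_num

lemma iter_succ {n : ℕ} [NeZero n] {p : ℝ} (hp : 0 ≤ p) (hp1 : p ≤ 1) (m : ℕ) (i j : ZMod n) :
    lazyIter n p hp hp1 (m+1) i j
      = lazyIter n p hp hp1 m i j * ENNReal.ofReal p
        + lazyIter n p hp hp1 m i (j - 1) * ENNReal.ofReal (1 - p) := by
  show ((lazyIter n p hp hp1 m i).bind (lazyStep n p hp hp1)) j = _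
  rw [PMF.bind_apply, tsum_fintype]
  have key : ∀ a : ZMod n, lazyIter n p hp hp1 m i a * lazyStep n p hp hp1 a j
      = (if j = a then lazyIter n p hp hp1 m i a * ENNReal.ofReal p else 0)
        + (if j - 1 = a then lazyIter n p hp hp1 m i a * ENNReal.ofReal (1 - p) else 0) := by
    intro a
    rw [step_apply hp hp1, mul_add, mul_ite, mul_zero, mul_ite, mul_zero]
    congr 1
    by_cases h : j = a + 1
    · rw [if_pos h, if_pos (by rw [h]; ring)]
    · rw [if_neg h, if_neg (fun hc => h (by rw [← hc]; ring))]
  simp_rw [key]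
  rw [Finset.sum_add_distrib, Finset.sum_ite_eq, Finset.sum_ite_eq]
  simp

lemma cast_inj_of_lt {n : ℕ} [NeZero n] {a b : ℕ} (ha : a < n) (hb : b < n)
    (h : (a : ZMod n) = b) : a = b := by
  have := congrArg ZMod.val h
  rwa [ZMod.val_cast_of_lt ha, ZMod.val_cast_of_lt hb] at this

lemma iter_formula {n : ℕ} [NeZero n] {p : ℝ} (hp : 0 ≤ p) (hp1 : p ≤ 1) (i : ZMod n) :
    ∀ m : ℕ, m < n →
      (∀ t : ℕ, t ≤ m → lazyIter n p hp hp1 m i (i + (t : ZMod n))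
          = (m.choose t : ℝ≥0∞) * ENNReal.ofReal p ^ (m - t) * ENNReal.ofReal (1 - p) ^ t)
      ∧ (∀ j : ZMod n, (∀ t : ℕ, t ≤ m → j ≠ i + (t : ZMod n)) →
          lazyIter n p hp hp1 m i j = 0) := by
  intro m
  induction m with
  | zero =>
    intro _
    constructor
    · intro t ht
      interval_cases t
      show (PMF.pure i) (i + ((0:ℕ) : ZMod n)) = _
      simp [PMF.pure_apply]
    · intro j hj
      show (PMF.pure i) j = 0
      have := hj 0 le_rfl
      simp only [Nat.cast_zero, add_zero] at this
      simp [PMF.pure_apply, this]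
  | succ m ih =>
    intro hmn
    obtain ⟨IH1, IH2⟩ := ih (by omega)
    have hzero : ∀ j : ZMod n, (∀ t : ℕ, t ≤ m + 1 → j ≠ i + (t : ZMod n)) →
        lazyIter n p hp hp1 (m+1) i j = 0 := by
      intro j hj
      rw [iter_succ]
      have h1 : lazyIter n p hp hp1 m i j = 0 :=
        IH2 j (fun t ht => hj t (by omega))
      have h2 : lazyIter n p hp hp1 m i (j - 1) = 0 := by
        refine IH2 (j - 1) (fun t ht hEq => ?_)
        have : j = i + ((t + 1 : ℕ) : ZMod n) := by
          push_cast
          rw [← add_assoc, ← hEq]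
          ring
        exact hj (t + 1) (by omega) this
      rw [h1, h2, zero_mul, zero_mul, add_zero]
    refine ⟨?_, hzero⟩
    intro t ht
    rw [iter_succ]
    match t with
    | 0 =>
      have hsub : i + ((0:ℕ) : ZMod n) - 1 = i - 1 := by push_cast; ring
      have h2 : lazyIter n p hp hp1 m i (i - 1) = 0 := by
        refine IH2 (i - 1) (fun t' ht' hEq => ?_)
        have : ((t' + 1 : ℕ) : ZMod n) = ((0 : ℕ) : ZMod n) := by
          push_cast
          have h3 : (t' : ZMod n) + 1 = 0 := by
            have := hEq
            rw [sub_eq_iff_eq_add] at this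
            -- i - 1 = i + t' means i = i + t' + 1
            have h4 : i = i + (t' : ZMod n) + 1 := this
            linear_combination h4.symm
          push_cast at h3 ⊢
          rw [h3]
        have := cast_inj_of_lt (by omega : t' + 1 < n) (by omega : 0 < n) this
        omega
      rw [hsub, h2, zero_mul, add_zero, IH1 0 (by omega)]
      simp [pow_succ]
    | s + 1 =>
      have hsub : i + ((s + 1 : ℕ) : ZMod n) - 1 = i + (s : ZMod n) := by push_cast; ring
      have hmid : lazyIter n p hp hp1 m i (i + ((s + 1 : ℕ) : ZMod n))
          = (m.choose (s+1) : ℝ≥0∞) * ENNReal.ofReal p ^ (m - (s+1))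
              * ENNReal.ofReal (1 - p) ^ (s+1) := by
        rcases Nat.lt_or_ge s m with hs | hs
        · exact IH1 (s+1) (by omega)
        · -- s = m, both sides 0
          have hsm : s = m := by omega
          subst hsm
          rw [Nat.choose_succ_self, Nat.cast_zero, zero_mul, zero_mul]
          refine IH2 _ (fun t' ht' hEq => ?_)
          have h5 := cast_inj_of_lt (by omega : s + 1 < n) (by omega : t' < n)
            (add_left_cancel hEq)
          omega
      rw [hsub, hmid, IH1 s (by omega)]
      have hms : m + 1 - (s + 1) = m - s := by omega
      rw [hms, Nat.choose_succ_succ]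
      push_cast
      rcases Nat.lt_or_ge s m with hs | hs
      · have h6 : m - (s+1) + 1 = m - s := by omega
        rw [← h6, pow_succ]
        ring
      · have hsm : s = m := by omega
        subst hsm
        rw [Nat.choose_succ_self]
        simp [pow_succ]

lemma atom_le {p : ℝ} (hp : 0 ≤ p) (hp1 : p ≤ 1) (k t : ℕ) (ht : t ≤ k)
    (hpk : (k : ℝ) / ((k : ℝ) + 1) ≤ p) :
    (k.choose t : ℝ≥0∞) * ENNReal.ofReal p ^ (k - t) * ENNReal.ofReal (1 - p) ^ t
      ≤ ENNReal.ofReal p ^ k := by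
  have hkq : (k : ℝ≥0∞) * ENNReal.ofReal (1 - p) ≤ ENNReal.ofReal p := by
    have h1 : (k : ℝ) * (1 - p) ≤ p := by
      have hk1 : (0:ℝ) < (k:ℝ) + 1 := by positivity
      rw [div_le_iff₀ hk1] at hpk
      nlinarith
    calc (k : ℝ≥0∞) * ENNReal.ofReal (1 - p)
        = ENNReal.ofReal ((k:ℝ) * (1 - p)) := by
          rw [ENNReal.ofReal_mul (by positivity)]
          simp
      _ ≤ ENNReal.ofReal p := ENNReal.ofReal_le_ofReal h1
  have hc : (k.choose t : ℝ≥0∞) ≤ (k : ℝ≥0∞) ^ t := by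
    rw [← Nat.cast_pow]
    exact Nat.cast_le.mpr ((Nat.choose_le_descFactorial k t).trans
      (Nat.descFactorial_le_pow k t))
  calc (k.choose t : ℝ≥0∞) * ENNReal.ofReal p ^ (k - t) * ENNReal.ofReal (1 - p) ^ t
      ≤ (k:ℝ≥0∞) ^ t * ENNReal.ofReal p ^ (k - t) * ENNReal.ofReal (1 - p) ^ t :=
        mul_le_mul' (mul_le_mul' hc le_rfl) le_rfl
    _ = ((k:ℝ≥0∞) * ENNReal.ofReal (1 - p)) ^ t * ENNReal.ofReal p ^ (k - t) := by
        rw [mul_pow]; ring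
    _ ≤ ENNReal.ofReal p ^ t * ENNReal.ofReal p ^ (k - t) :=
        mul_le_mul' (pow_le_pow_left₀ zero_le hkq t) le_rfl
    _ = ENNReal.ofReal p ^ k := by rw [← pow_add]; congr 1; omega

/-- **Delay-regret lower bound for the lazy cycle walk.**
If `n > k` and `p ≥ k/(k+1)`, then for every start state `i` the largest atom
of the `k`-step distribution is `p^k` (attained at the start state), so every
randomized guess `g` of the current state based on the state from `k` steps
earlier is correct with probability at most `p^k`; hence in the environment
rewarding `1` exactly when the chosen action index matches the current state,
every `k`-step-delayed policy suffers expected per-step regret `≥ 1 − p^k`. -/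
theorem lazy_cycle_delay_regret (n : ℕ) [NeZero n] (p : ℝ) (hp : 0 ≤ p) (hp1 : p ≤ 1)
    (k : ℕ) (hnk : k < n) (hpk : (k : ℝ) / ((k : ℝ) + 1) ≤ p) (i : ZMod n) :
    (⨆ j : ZMod n, lazyIter n p hp hp1 k i j) = ENNReal.ofReal p ^ k
      ∧ (∀ g : PMF (ZMod n),
          (∑ j : ZMod n, g j * lazyIter n p hp hp1 k i j) ≤ ENNReal.ofReal p ^ k)
      ∧ (∀ g : PMF (ZMod n),
          (1 : ℝ≥0∞) - (∑ j : ZMod n, g j * lazyIter n p hp hp1 k i j)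
            ≥ 1 - ENNReal.ofReal p ^ k) := by
  obtain ⟨H1, H2⟩ := iter_formula hp hp1 i k hnk
  have h_i : lazyIter n p hp hp1 k i i = ENNReal.ofReal p ^ k := by
    have := H1 0 (Nat.zero_le k)
    simpa using this
  have h_le : ∀ j, lazyIter n p hp hp1 k i j ≤ ENNReal.ofReal p ^ k := by
    intro j
    by_cases hj : ∀ t : ℕ, t ≤ k → j ≠ i + (t : ZMod n)
    · rw [H2 j hj]; exact zero_le
    · push_neg at hj
      obtain ⟨t, ht, hEq⟩ := hj
      rw [hEq, H1 t ht]
      exact atom_le hp hp1 k t ht hpk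
  have hsum : ∀ g : PMF (ZMod n),
      (∑ j : ZMod n, g j * lazyIter n p hp hp1 k i j) ≤ ENNReal.ofReal p ^ k := by
    intro g
    calc ∑ j : ZMod n, g j * lazyIter n p hp hp1 k i j
        ≤ ∑ j : ZMod n, g j * ENNReal.ofReal p ^ k :=
          Finset.sum_le_sum (fun j _ => mul_le_mul' le_rfl (h_le j))
      _ = (∑ j : ZMod n, g j) * ENNReal.ofReal p ^ k := by rw [Finset.sum_mul]
      _ = 1 * ENNReal.ofReal p ^ k := by
          rw [show (∑ j : ZMod n, g j) = 1 from by rw [← tsum_fintype (L := SummationFilter.unconditional _)]; exact g.tsum_coe]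
      _ = ENNReal.ofReal p ^ k := one_mul _
  exact ⟨le_antisymm (iSup_le h_le)
      (h_i ▸ le_iSup (fun j => lazyIter n p hp hp1 k i j) i),
    hsum, fun g => tsub_le_tsub_left (hsum g) 1⟩
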